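/- Under the same assumptions, the second pressure virial theorem holds: ⟨P_ins V⟩ = P⟨V⟩ − k_BT, where ⟨·⟩ denotes the NPT ensemble average with weight exp(−βPV)Q(N,V,T)dV / Δ. -/

import Mathlib

open MeasureTheory

/-- second pressure virial theorem `⟨P_ins V⟩ = P⟨V⟩ − k_BT`.
Same setting as the first virial theorem: `Q` is the canonical partition
function, `A V = ⟨P_ins⟩_NVT` characterized by `∂_V Q = β Q A`, and the NPT
average uses weight `e^{−βPV} Q(V) dV / Δ`, with
`V Q(V) e^{−βPV} → 0` at both endpoints. -/
theorem pressure_virial_theorem_second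
    (β P kBT : ℝ) (hβ : 0 < β) (hP : 0 < P) (hkBT : kBT = 1 / β)
    (Q A : ℝ → ℝ)
    (hQpos : ∀ V ∈ Set.Ioi (0 : ℝ), 0 < Q V)
    (hQderiv : ∀ V ∈ Set.Ioi (0 : ℝ), HasDerivAt Q (β * Q V * A V) V)
    (hint1 : IntegrableOn (fun V => Real.exp (-(β * P * V)) * Q V) (Set.Ioi 0))
    (hint2 : IntegrableOn (fun V => Real.exp (-(β * P * V)) * Q V * A V * V) (Set.Ioi 0))
    (hint3 : IntegrableOn (fun V => Real.exp (-(β * P * V)) * Q V * V) (Set.Ioi 0))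
    (h0 : Filter.Tendsto (fun V => V * (Real.exp (-(β * P * V)) * Q V))
      (nhdsWithin 0 (Set.Ioi 0)) (nhds 0))
    (hinf : Filter.Tendsto (fun V => V * (Real.exp (-(β * P * V)) * Q V))
      Filter.atTop (nhds 0))
    (Δ : ℝ) (hΔ : Δ = ∫ V in Set.Ioi (0 : ℝ), Real.exp (-(β * P * V)) * Q V)
    (hΔ0 : Δ ≠ 0) :
    (∫ V in Set.Ioi (0 : ℝ), Real.exp (-(β * P * V)) * Q V * A V * V) / Δ
      = P * ((∫ V in Set.Ioi (0 : ℝ), Real.exp (-(β * P * V)) * Q V * V) / Δ) - kBT := by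
  set g : ℝ → ℝ := fun V => V * (Real.exp (-(β * P * V)) * Q V) with hg
  set g' : ℝ → ℝ := fun V => Real.exp (-(β * P * V)) * Q V
      - β * P * (Real.exp (-(β * P * V)) * Q V * V)
      + β * (Real.exp (-(β * P * V)) * Q V * A V * V) with hg'def
  have hderiv : ∀ V ∈ Set.Ioi (0 : ℝ), HasDerivAt g (g' V) V := by
    intro V hV
    have hE : HasDerivAt (fun x : ℝ => Real.exp (-(β * P * x)))
        (Real.exp (-(β * P * V)) * (-(β * P))) V := by
      have : HasDerivAt (fun x : ℝ => -(β * P * x)) (-(β * P)) V := by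
        exact (((hasDerivAt_id V).const_mul (β * P)).neg).congr_deriv (by ring)
      simpa using this.exp
    have := ((hasDerivAt_id V).mul (hE.mul (hQderiv V hV)))
    refine this.congr_deriv ?_
    simp only [hg'def, id_eq, Pi.mul_apply]
    ring
  have hgint : IntegrableOn g' (Set.Ioi (0 : ℝ)) :=
    (hint1.sub (hint3.const_mul (β * P))).add (hint2.const_mul β)
  -- key : the integral of g' over Ioi 0 vanishes
  have key : (∫ V in Set.Ioi (0 : ℝ), g' V) = 0 := by
    set a : ℕ → ℝ := fun n => ((n : ℝ) + 1)⁻¹ with ha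
    set b : ℕ → ℝ := fun n => (n : ℝ) with hb
    have ha_pos : ∀ n, 0 < a n := fun n => by
      simp only [ha]; positivity
    have ha_tendsto : Filter.Tendsto a Filter.atTop (nhds 0) :=
      tendsto_one_div_add_atTop_nhds_zero_nat.congr (fun n => by
        simp [ha, one_div])
    have hb_tendsto : Filter.Tendsto b Filter.atTop Filter.atTop :=
      tendsto_natCast_atTop_atTop
    -- AECover of volume.restrict (Ioi 0)
    have hcover : AECover (volume.restrict (Set.Ioi (0:ℝ))) Filter.atTop
        (fun n => Set.Ioc (a n) (b n)) := by
      constructor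
      · rw [ae_restrict_iff' measurableSet_Ioi]
        refine Filter.Eventually.of_forall (fun x hx => ?_)
        have h1 : ∀ᶠ n in Filter.atTop, a n < x :=
          (ha_tendsto.eventually_lt_const hx)
        have h2 : ∀ᶠ n in Filter.atTop, x ≤ b n :=
          hb_tendsto.eventually (Filter.eventually_ge_atTop x)
        filter_upwards [h1, h2] with n hn1 hn2
        exact ⟨hn1, hn2⟩
      · intro n; exact measurableSet_Ioc
    have h_toint : Filter.Tendsto
        (fun n => ∫ V in Set.Ioc (a n) (b n), g' V ∂(volume.restrict (Set.Ioi (0:ℝ))))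
        Filter.atTop (nhds (∫ V in Set.Ioi (0:ℝ), g' V)) :=
      hcover.integral_tendsto_of_countably_generated hgint
    have h_eq : ∀ n, (∫ V in Set.Ioc (a n) (b n), g' V ∂(volume.restrict (Set.Ioi (0:ℝ))))
        = ∫ V in Set.Ioc (a n) (b n), g' V := by
      intro n
      have hsub : Set.Ioc (a n) (b n) ∩ Set.Ioi 0 = Set.Ioc (a n) (b n) :=
        Set.inter_eq_left.2 (fun x hx => Set.mem_Ioi.2 (lt_trans (ha_pos n) hx.1))
      rw [Measure.restrict_restrict measurableSet_Ioc, hsub]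
    have h_ftc : ∀ᶠ n in Filter.atTop, (∫ V in Set.Ioc (a n) (b n), g' V)
        = g (b n) - g (a n) := by
      filter_upwards [Filter.eventually_ge_atTop 1] with n hn
      have hab : a n ≤ b n := by
        have h1 : a n ≤ 1 := by
          rw [ha]
          rw [inv_le_one_iff₀]
          right
          have : (0:ℝ) ≤ (n:ℝ) := Nat.cast_nonneg n
          linarith
        have h2 : (1:ℝ) ≤ b n := by simp only [hb]; exact_mod_cast hn
        linarith
      rw [← intervalIntegral.integral_of_le hab]
      apply intervalIntegral.integral_eq_sub_of_hasDerivAt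
      · intro x hx
        rw [Set.uIcc_of_le hab] at hx
        exact hderiv x (lt_of_lt_of_le (ha_pos n) hx.1)
      · rw [intervalIntegrable_iff_integrableOn_Ioc_of_le hab]
        exact hgint.mono_set (fun x hx => lt_of_lt_of_le (ha_pos n) (le_of_lt hx.1))
    have h_lim0 : Filter.Tendsto (fun n => g (b n) - g (a n)) Filter.atTop (nhds 0) := by
      have hgb : Filter.Tendsto (fun n => g (b n)) Filter.atTop (nhds 0) :=
        hinf.comp hb_tendsto
      have hga : Filter.Tendsto (fun n => g (a n)) Filter.atTop (nhds 0) := by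
        refine h0.comp ?_
        exact tendsto_nhdsWithin_of_tendsto_nhds_of_eventually_within _ ha_tendsto
          (Filter.Eventually.of_forall (fun n => ha_pos n))
      simpa using hgb.sub hga
    have : Filter.Tendsto
        (fun n => ∫ V in Set.Ioc (a n) (b n), g' V ∂(volume.restrict (Set.Ioi (0:ℝ))))
        Filter.atTop (nhds 0) := by
      refine Filter.Tendsto.congr' ?_ h_lim0
      filter_upwards [h_ftc] with n hn
      rw [h_eq n, hn]
    exact tendsto_nhds_unique h_toint this
  -- split the integral of g'
  have hsplit : (∫ V in Set.Ioi (0:ℝ), g' V)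
      = (∫ V in Set.Ioi (0:ℝ), Real.exp (-(β * P * V)) * Q V)
        - β * P * (∫ V in Set.Ioi (0:ℝ), Real.exp (-(β * P * V)) * Q V * V)
        + β * (∫ V in Set.Ioi (0:ℝ), Real.exp (-(β * P * V)) * Q V * A V * V) := by
    have hrw : (∫ V in Set.Ioi (0:ℝ), g' V)
        = ∫ V in Set.Ioi (0:ℝ), ((Real.exp (-(β * P * V)) * Q V)
          + ((-(β * P)) * (Real.exp (-(β * P * V)) * Q V * V)
            + β * (Real.exp (-(β * P * V)) * Q V * A V * V))) := by
      apply integral_congr_ae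
      refine Filter.Eventually.of_forall (fun V => ?_)
      simp only [hg'def]; ring
    have hX : IntegrableOn (fun V => (-(β * P)) * (Real.exp (-(β * P * V)) * Q V * V)
        + β * (Real.exp (-(β * P * V)) * Q V * A V * V)) (Set.Ioi 0) :=
      (hint3.const_mul (-(β * P))).add (hint2.const_mul β)
    have hI23 : (∫ V in Set.Ioi (0:ℝ), ((-(β * P)) * (Real.exp (-(β * P * V)) * Q V * V)
          + β * (Real.exp (-(β * P * V)) * Q V * A V * V)))
        = (-(β * P)) * (∫ V in Set.Ioi (0:ℝ), Real.exp (-(β * P * V)) * Q V * V)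
          + β * (∫ V in Set.Ioi (0:ℝ), Real.exp (-(β * P * V)) * Q V * A V * V) := by
      rw [integral_add (hint3.const_mul (-(β * P))) (hint2.const_mul β),
        integral_const_mul, integral_const_mul]
    rw [hrw, integral_add hint1 hX, hI23]
    ring
  rw [hsplit] at key
  rw [← hΔ] at key
  have hβ' : β ≠ 0 := ne_of_gt hβ
  rw [hkBT]
  rw [div_eq_iff hΔ0, sub_mul, mul_assoc, div_mul_cancel₀ _ hΔ0]
  apply mul_left_cancel₀ hβ'
  linear_combination key + Δ * (mul_one_div_cancel hβ')
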